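/- Let n ≥ 1 and let ζ = exp(2πi/n) ∈ ℂ. For t, s ∈ ℂ with |t| = |s| = 1, and for every index j ≥ 1, the j-th coefficients of the real polynomials f_t and f_s coincide: (f_t).coeff j = (f_s).coeff j. In other words, all coefficients of f_t except the constant term are independent of the rotation parameter t. -/

import Mathlib

open Polynomial Finset

private lemma prod_lin_aux {n : ℕ} (hn : 0 < n) {μ : ℂ} (hμ : IsPrimitiveRoot μ n)
    (d a : ℂ) : ∏ k ∈ Finset.range n, (d - a * μ ^ k) = d ^ n - a ^ n := by
  have base : ∀ y : ℂ, ∏ k ∈ Finset.range n, (y - μ ^ k) = y ^ n - 1 := by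
    intro y
    have := congrArg (Polynomial.eval y) (X_pow_sub_C_eq_prod hμ hn (one_pow n))
    simpa [Polynomial.eval_prod] using this.symm
  rcases eq_or_ne a 0 with rfl | ha
  · simp [Finset.prod_const, Finset.card_range, zero_pow hn.ne']
  · have h1 : ∀ k ∈ Finset.range n, d - a * μ ^ k = a * (d / a - μ ^ k) := by
      intro k _; field_simp
    rw [Finset.prod_congr rfl h1, Finset.prod_mul_distrib, Finset.prod_const,
      Finset.card_range, base (d / a)]
    rw [div_pow, mul_sub, mul_div_cancel₀ _ (pow_ne_zero n ha), mul_one]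

/-- All coefficients of `f_t` except the constant term are independent of the
rotation parameter `t` on the unit circle. -/
theorem coeff_rotation_invariant (n : ℕ) (hn : 1 ≤ n)
    (ζ : ℂ) (hζ : ζ = Complex.exp (2 * Real.pi * Complex.I / n))
    (t s : ℂ) (ht : ‖t‖ = 1) (hs : ‖s‖ = 1)
    (j : ℕ) (hj : 1 ≤ j) :
    (∏ k ∈ Finset.range n, (X - C (Complex.re (t * ζ ^ k)))).coeff j =
      (∏ k ∈ Finset.range n, (X - C (Complex.re (s * ζ ^ k)))).coeff j := by
  have hn0 : n ≠ 0 := by omega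
  have hnpos : 0 < n := hn
  have hprim : IsPrimitiveRoot ζ n := by
    rw [hζ]; exact Complex.isPrimitiveRoot_exp n hn0
  have hζ0 : ζ ≠ 0 := hprim.ne_zero hn0
  have hζabs : ‖ζ‖ = 1 := by
    have h1 : ‖ζ‖ ^ n = 1 := by
      rw [← norm_pow, hprim.pow_eq_one, norm_one]
    have h2 := norm_nonneg ζ
    rcases (pow_eq_one_iff_cases.mp h1) with h | h | h
    · omega
    · exact h
    · nlinarith [h.1]
  have hmulconj : ∀ w : ℂ, ‖w‖ = 1 → w * (starRingEnd ℂ) w = 1 := by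
    intro w hw
    rw [Complex.mul_conj]
    norm_cast
    rw [Complex.normSq_eq_norm_sq, hw]; norm_num
  have hconjζ : (starRingEnd ℂ) ζ = ζ⁻¹ := (inv_eq_of_mul_eq_one_right (hmulconj ζ hζabs)).symm
  -- key evaluation formula
  have key : ∀ u : ℂ, ‖u‖ = 1 → ∀ x z : ℂ, z ≠ 0 → 4 * z ^ 2 + 1 = 4 * x * z →
      ∏ k ∈ Finset.range n, (x - ((Complex.re (u * ζ ^ k) : ℝ) : ℂ)) =
        (z ^ n - (u / 2) ^ n) * (1 - ((starRingEnd ℂ) u / (2 * z)) ^ n) := by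
    intro u hu x z hz hxz
    have hu1 : u * (starRingEnd ℂ) u = 1 := hmulconj u hu
    have hfac : ∀ k ∈ Finset.range n,
        x - ((Complex.re (u * ζ ^ k) : ℝ) : ℂ) =
          (z - (u / 2) * ζ ^ k) * (1 - ((starRingEnd ℂ) u / (2 * z)) * (ζ⁻¹) ^ k) := by
      intro k _
      have hre : ((Complex.re (u * ζ ^ k) : ℝ) : ℂ) =
          (u * ζ ^ k + (starRingEnd ℂ) (u * ζ ^ k)) / 2 := Complex.re_eq_add_conj _
      have hcj : (starRingEnd ℂ) (u * ζ ^ k) = (starRingEnd ℂ) u * (ζ⁻¹) ^ k := by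
        rw [map_mul, map_pow, hconjζ]
      have hk : ζ ^ k * (ζ⁻¹) ^ k = 1 := by
        rw [← mul_pow, mul_inv_cancel₀ hζ0, one_pow]
      have hyk : ζ ^ k ≠ 0 := pow_ne_zero _ hζ0
      rw [hre, hcj, inv_pow]
      field_simp
      linear_combination (-ζ ^ k) * hu1 + (-ζ ^ k) * hxz
    rw [Finset.prod_congr rfl hfac, Finset.prod_mul_distrib,
      prod_lin_aux hnpos hprim z (u / 2),
      prod_lin_aux hnpos hprim.inv 1 ((starRingEnd ℂ) u / (2 * z)), one_pow]
  -- the two complex polynomials differ by a constant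
  set Pt : ℂ[X] := ∏ k ∈ Finset.range n, (X - C ((Complex.re (t * ζ ^ k) : ℝ) : ℂ)) with hPt
  set Ps : ℂ[X] := ∏ k ∈ Finset.range n, (X - C ((Complex.re (s * ζ ^ k) : ℝ) : ℂ)) with hPs
  have ht1 : t * (starRingEnd ℂ) t = 1 := hmulconj t ht
  have hs1 : s * (starRingEnd ℂ) s = 1 := hmulconj s hs
  set c : ℂ := ((s / 2) ^ n + ((starRingEnd ℂ) s / 2) ^ n)
      - ((t / 2) ^ n + ((starRingEnd ℂ) t / 2) ^ n) with hc
  have hpoly : Pt = Ps + C c := by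
    apply Polynomial.funext
    intro x
    obtain ⟨w, hw⟩ := IsAlgClosed.exists_pow_nat_eq (x ^ 2 - 1) zero_lt_two
    set z : ℂ := (x + w) / 2 with hzdef
    have hz2 : z * ((x - w) / 2) = 1 / 4 := by
      rw [hzdef]; linear_combination (-1/4 : ℂ) * hw
    have hz : z ≠ 0 := by
      intro h; rw [h, zero_mul] at hz2; norm_num at hz2
    have hxz : 4 * z ^ 2 + 1 = 4 * x * z := by
      rw [hzdef]; linear_combination hw
    clear hzdef hz2
    clear_value z
    have e1 : Polynomial.eval x Pt = ∏ k ∈ Finset.range n,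
        (x - ((Complex.re (t * ζ ^ k) : ℝ) : ℂ)) := by
      simp [hPt, Polynomial.eval_prod]
    have e2 : Polynomial.eval x Ps = ∏ k ∈ Finset.range n,
        (x - ((Complex.re (s * ζ ^ k) : ℝ) : ℂ)) := by
      simp [hPs, Polynomial.eval_prod]
    rw [Polynomial.eval_add, Polynomial.eval_C, e1, e2, key t ht x z hz hxz,
      key s hs x z hz hxz, hc]
    have htn : t ^ n * ((starRingEnd ℂ) t) ^ n = 1 := by
      rw [← mul_pow, ht1, one_pow]
    have hsn : s ^ n * ((starRingEnd ℂ) s) ^ n = 1 := by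
      rw [← mul_pow, hs1, one_pow]
    field_simp
    have hzn : z ^ n * z⁻¹ ^ n = 1 := by
      rw [← mul_pow, mul_inv_cancel₀ hz, one_pow]
    linear_combination (1 / 2 : ℂ) ^ (n * 2) * z⁻¹ ^ n * htn - (1 / 2 : ℂ) ^ (n * 2) * z⁻¹ ^ n * hsn
      - (starRingEnd ℂ) t ^ n * (1 / 2 : ℂ) ^ n * hzn + (starRingEnd ℂ) s ^ n * (1 / 2 : ℂ) ^ n * hzn
  -- transfer back to ℝ
  have hmap : ∀ u : ℂ,
      Polynomial.map (algebraMap ℝ ℂ) (∏ k ∈ Finset.range n, (X - C (Complex.re (u * ζ ^ k)))) =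
        ∏ k ∈ Finset.range n, (X - C ((Complex.re (u * ζ ^ k) : ℝ) : ℂ)) := by
    intro u
    rw [Polynomial.map_prod]
    simp [Polynomial.map_sub]
  apply Complex.ofReal_injective
  have h1 : ((( ∏ k ∈ Finset.range n, (X - C (Complex.re (t * ζ ^ k)))).coeff j : ℝ) : ℂ)
      = Pt.coeff j := by
    rw [hPt, ← hmap t, Polynomial.coeff_map]; rfl
  have h2 : ((( ∏ k ∈ Finset.range n, (X - C (Complex.re (s * ζ ^ k)))).coeff j : ℝ) : ℂ)
      = Ps.coeff j := by
    rw [hPs, ← hmap s, Polynomial.coeff_map]; rfl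
  rw [h1, h2, hpoly, Polynomial.coeff_add, Polynomial.coeff_C, if_neg (by omega), add_zero]
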